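/- For every q ∈ (0,1) and every real x ≥ 0, D_KL(Poi_x ‖ Y^(q)) ≤ log S(q) − x·log q. -/

import Mathlib

open Real Nat MeasureTheory Filter Set
open scoped ENNReal NNReal

lemma exp_tsum (x : ℝ) : Real.exp x = ∑' n : ℕ, x ^ n / (n ! : ℝ) := by
  rw [Real.exp_eq_exp_ℝ, NormedSpace.exp_eq_tsum_div]

lemma summable_p (x : ℝ) : Summable (fun n : ℕ => x ^ n / (n ! : ℝ)) :=
  Real.summable_pow_div_factorial x

lemma summable_np (x : ℝ) : Summable (fun n : ℕ => (n : ℝ) * (x ^ n / (n ! : ℝ))) := by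
  rw [← summable_nat_add_iff 1]
  have : (fun n : ℕ => ((n + 1 : ℕ) : ℝ) * (x ^ (n + 1) / ((n+1)! : ℝ))) =
      fun n : ℕ => x * (x ^ n / (n ! : ℝ)) := by
    funext n
    rw [Nat.factorial_succ]
    push_cast
    field_simp
    ring
  rw [this]
  exact (summable_p x).mul_left x

lemma tsum_np (x : ℝ) : ∑' n : ℕ, (n : ℝ) * (x ^ n / (n ! : ℝ)) = x * Real.exp x := by
  rw [Summable.tsum_eq_zero_add (summable_np x)]
  simp only [Nat.cast_zero, zero_mul, zero_add]
  have : (fun n : ℕ => ((n + 1 : ℕ) : ℝ) * (x ^ (n + 1) / ((n+1)! : ℝ))) =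
      fun n : ℕ => x * (x ^ n / (n ! : ℝ)) := by
    funext n
    rw [Nat.factorial_succ]
    push_cast
    field_simp
    ring
  rw [this, tsum_mul_left, ← exp_tsum]

lemma summable_nnp (x : ℝ) : Summable (fun n : ℕ => (n : ℝ)^2 * (x ^ n / (n ! : ℝ))) := by
  rw [← summable_nat_add_iff 1]
  have : (fun n : ℕ => ((n + 1 : ℕ) : ℝ)^2 * (x ^ (n + 1) / ((n+1)! : ℝ))) =
      fun n : ℕ => x * ((n:ℝ) * (x ^ n / (n ! : ℝ))) + x * (x ^ n / (n ! : ℝ)) := by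
    funext n
    rw [Nat.factorial_succ]
    push_cast
    field_simp
    ring
  rw [this]
  exact (((summable_np x).mul_left x).add ((summable_p x).mul_left x))

lemma tsum_nnp (x : ℝ) : ∑' n : ℕ, (n : ℝ)^2 * (x ^ n / (n ! : ℝ)) = (x^2 + x) * Real.exp x := by
  rw [Summable.tsum_eq_zero_add (summable_nnp x)]
  simp only [Nat.cast_zero, zero_pow, zero_mul, zero_add, ne_eq, OfNat.ofNat_ne_zero,
    not_false_iff]
  have : (fun n : ℕ => ((n + 1 : ℕ) : ℝ)^2 * (x ^ (n + 1) / ((n+1)! : ℝ))) =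
      fun n : ℕ => x * ((n:ℝ) * (x ^ n / (n ! : ℝ))) + x * (x ^ n / (n ! : ℝ)) := by
    funext n
    rw [Nat.factorial_succ]
    push_cast
    field_simp
    ring
  rw [this, Summable.tsum_add (((summable_np x).mul_left x)) (((summable_p x).mul_left x)),
    tsum_mul_left, tsum_mul_left, tsum_np, ← exp_tsum]
  ring

lemma harmonic_le (n : ℕ) : (harmonic n : ℝ) ≤ n := by
  induction n with
  | zero => simp
  | succ m ih =>
    rw [harmonic_succ]
    push_cast
    push_cast at ih
    have : ((m:ℝ)+1)⁻¹ ≤ 1 := by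
      rw [inv_le_one_iff₀]
      right; linarith [Nat.cast_nonneg (α := ℝ) m]
    linarith

lemma harmonic_ge {n : ℕ} (hn : n ≠ 0) :
    Real.eulerMascheroniConstant + Real.log n ≤ (harmonic n : ℝ) := by
  have h := Real.eulerMascheroniConstant_lt_eulerMascheroniSeq' n
  rw [Real.eulerMascheroniSeq'] at h
  simp only [hn, if_false] at h
  linarith

lemma harmonic_lt (n : ℕ) :
    (harmonic n : ℝ) < Real.eulerMascheroniConstant + Real.log (n+1) := by
  have h := Real.eulerMascheroniSeq_lt_eulerMascheroniConstant n
  rw [Real.eulerMascheroniSeq] at h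
  linarith

lemma summable_H (x : ℝ) (hx : 0 ≤ x) :
    Summable (fun n : ℕ => (x ^ n / (n ! : ℝ)) * (harmonic n : ℝ)) := by
  apply Summable.of_nonneg_of_le (fun n => ?_) (fun n => ?_) (summable_np x)
  · have h1 : 0 ≤ x ^ n / (n ! : ℝ) := by positivity
    have h2 : (0:ℝ) ≤ (harmonic n : ℝ) := by
      rcases eq_or_ne n 0 with h | h
      · simp [h]
      · exact_mod_cast (harmonic_pos h).le
    exact mul_nonneg h1 h2
  · have h1 : 0 ≤ x ^ n / (n ! : ℝ) := by positivity
    calc (x ^ n / (n ! : ℝ)) * (harmonic n : ℝ) ≤ (x ^ n / (n ! : ℝ)) * n :=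
          mul_le_mul_of_nonneg_left (harmonic_le n) h1
      _ = (n:ℝ) * (x ^ n / (n ! : ℝ)) := by ring

noncomputable def qq (x : ℝ) (m : ℕ) : ℝ := x ^ m * (x + 1 - m)^2 / (m ! : ℝ)

lemma qq_eq (x : ℝ) : qq x = fun m : ℕ =>
    (x+1)^2 * (x ^ m / (m ! : ℝ)) - (2*(x+1)) * ((m:ℝ) * (x ^ m / (m ! : ℝ)))
      + (m:ℝ)^2 * (x ^ m / (m ! : ℝ)) := by
  funext m
  unfold qq
  field_simp
  ring

lemma summable_qq (x : ℝ) : Summable (qq x) := by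
  rw [qq_eq]
  exact (((summable_p x).mul_left _).sub ((summable_np x).mul_left _)).add (summable_nnp x)

lemma tsum_qq (x : ℝ) : ∑' m, qq x m = Real.exp x * (x + 1) := by
  rw [qq_eq, Summable.tsum_add (((summable_p x).mul_left _).sub ((summable_np x).mul_left _))
    (summable_nnp x), Summable.tsum_sub ((summable_p x).mul_left _) ((summable_np x).mul_left _),
    tsum_mul_left, tsum_mul_left, tsum_np, tsum_nnp, ← exp_tsum]
  ring

local notation "γ" => Real.eulerMascheroniConstant

section C
variable {x : ℝ} (hx : 0 < x)

noncomputable def aa (x : ℝ) (n : ℕ) : ℝ :=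
  (x ^ n / (n ! : ℝ)) * ((γ + Real.log x) + ((n:ℝ) - x)/x)

noncomputable def bb (x : ℝ) (n : ℕ) : ℝ := (2/x^2) * qq x (n+1)

noncomputable def cc (x : ℝ) (n : ℕ) : ℝ := if n = 0 then (γ + Real.log x - 1) else 0

lemma aa_decomp (hx : 0 < x) : aa x = fun n => (γ + Real.log x - 1) * (x ^ n / (n ! : ℝ))
    + (1/x) * ((n:ℝ) * (x ^ n / (n ! : ℝ))) := by
  funext n
  have hne : (n ! : ℝ) ≠ 0 := Nat.cast_ne_zero.mpr n.factorial_ne_zero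
  unfold aa
  field_simp
  ring

lemma summable_aa (hx : 0 < x) : Summable (aa x) := by
  rw [aa_decomp hx]
  exact ((summable_p x).mul_left _).add ((summable_np x).mul_left _)

lemma tsum_aa (hx : 0 < x) : ∑' n, aa x n = Real.exp x * (γ + Real.log x) := by
  rw [aa_decomp hx, Summable.tsum_add ((summable_p x).mul_left _) ((summable_np x).mul_left _),
    tsum_mul_left, tsum_mul_left, tsum_np, ← exp_tsum]
  field_simp
  ring

lemma summable_bb : Summable (bb x) := by
  unfold bb
  exact (((summable_nat_add_iff 1).mpr (summable_qq x))).mul_left _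

lemma tsum_bb_le (hx : 0 < x) : ∑' n, bb x n ≤ 2 * (x+1) * Real.exp x / x^2 := by
  unfold bb
  rw [tsum_mul_left]
  have h1 : ∑' n : ℕ, qq x (n+1) = Real.exp x * (x+1) - qq x 0 := by
    have := Summable.tsum_eq_zero_add (summable_qq x)
    rw [tsum_qq] at this
    linarith
  rw [h1]
  have h0 : 0 ≤ qq x 0 := by unfold qq; positivity
  have h2 : (0:ℝ) ≤ 2/x^2 := by positivity
  calc 2/x^2 * (Real.exp x * (x+1) - qq x 0) ≤ 2/x^2 * (Real.exp x * (x+1)) := by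
        apply mul_le_mul_of_nonneg_left _ h2; linarith
    _ = 2 * (x+1) * Real.exp x / x^2 := by ring

lemma summable_cc : Summable (cc x) := by
  apply summable_of_ne_finset_zero (s := {0})
  intro n hn
  simp only [Finset.mem_singleton] at hn
  unfold cc
  simp [hn]

lemma tsum_cc : ∑' n, cc x n = γ + Real.log x - 1 := by
  rw [tsum_eq_single 0]
  · simp [cc]
  · intro n hn; simp [cc, hn]

lemma pointwise_C (hx : 0 < x) (n : ℕ) :
    aa x n - bb x n - cc x n ≤ (x ^ n / (n ! : ℝ)) * (harmonic n : ℝ) := by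
  have hb : 0 ≤ bb x n := by
    unfold bb qq; positivity
  rcases eq_or_ne n 0 with h | h
  · subst h
    simp only [cc, if_true, aa, pow_zero, Nat.factorial_zero, Nat.cast_one, harmonic_zero,
      Rat.cast_zero, mul_zero, Nat.cast_zero]
    have : (1:ℝ)/1 * (γ + Real.log x + (0 - x)/x) = γ + Real.log x - 1 := by
      field_simp
      ring
    rw [this]
    linarith
  · have hn1 : (1:ℝ) ≤ (n:ℝ) := by exact_mod_cast Nat.one_le_iff_ne_zero.mpr h
    have hnpos : (0:ℝ) < n := by linarith
    have ht : (0:ℝ) < x ^ n / (n ! : ℝ) := by positivity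
    have hH : γ + Real.log n ≤ (harmonic n : ℝ) := harmonic_ge h
    have hlog : Real.log x + ((n:ℝ) - x)/(n:ℝ) ≤ Real.log n := by
      have h2 : Real.log (x / n) ≤ x/(n:ℝ) - 1 :=
        Real.log_le_sub_one_of_pos (by positivity)
      rw [Real.log_div (ne_of_gt hx) (ne_of_gt hnpos)] at h2
      have : ((n:ℝ) - x)/(n:ℝ) = 1 - x/(n:ℝ) := by field_simp
      rw [this]; linarith
    have hquad : ((n:ℝ) - x)/x - ((n:ℝ) - x)/(n:ℝ) ≤ 2*(x - n)^2/(((n:ℝ)+1)*x) := by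
      have e1 : ((n:ℝ) - x)/x - ((n:ℝ) - x)/(n:ℝ) = (x - n)^2/((n:ℝ)*x) := by
        field_simp; ring
      rw [e1, div_le_div_iff₀ (by positivity) (by positivity)]
      nlinarith [mul_nonneg (mul_nonneg (sub_nonneg.2 hn1) hx.le) (sq_nonneg (x - (n:ℝ)))]
    have hbn : (x ^ n / (n ! : ℝ)) * (2*(x - n)^2/(((n:ℝ)+1)*x)) = bb x n := by
      unfold bb qq
      rw [Nat.factorial_succ]
      have : ((x:ℝ) + 1 - (n+1:ℕ)) ^2 = (x - n)^2 := by push_cast; ring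
      rw [this]
      push_cast
      field_simp
      ring
    have key : (γ + Real.log x) + ((n:ℝ) - x)/x - 2*(x - n)^2/(((n:ℝ)+1)*x)
        ≤ (harmonic n : ℝ) := by linarith
    have : aa x n - bb x n = (x ^ n / (n ! : ℝ)) *
        ((γ + Real.log x) + ((n:ℝ) - x)/x - 2*(x - n)^2/(((n:ℝ)+1)*x)) := by
      unfold aa; rw [← hbn]; ring
    rw [this]
    have hc : cc x n = 0 := by unfold cc; simp [h]
    rw [hc, sub_zero]
    exact mul_le_mul_of_nonneg_left key ht.le

lemma EH_lower (hx : 0 < x) :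
    Real.exp x * (γ + Real.log x) - 2 * (x+1) * Real.exp x / x^2 - (γ + Real.log x - 1)
      ≤ ∑' n, (x ^ n / (n ! : ℝ)) * (harmonic n : ℝ) := by
  have hsum : Summable (fun n => aa x n - bb x n - cc x n) :=
    ((summable_aa hx).sub summable_bb).sub summable_cc
  have h1 : ∑' n, (aa x n - bb x n - cc x n)
      ≤ ∑' n, (x ^ n / (n ! : ℝ)) * (harmonic n : ℝ) :=
    Summable.tsum_le_tsum (pointwise_C hx) hsum (summable_H x hx.le)
  rw [Summable.tsum_sub ((summable_aa hx).sub summable_bb) summable_cc,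
    Summable.tsum_sub (summable_aa hx) summable_bb, tsum_aa hx, tsum_cc] at h1
  have := tsum_bb_le hx
  linarith

end C




-- interval integral of (1-u/x)^k
lemma int_pow (x : ℝ) (hx : 0 < x) (k : ℕ) :
    ∫ u in Set.Ioc (0:ℝ) x, (1 - u/x)^k = x / (k+1) := by
  rw [← intervalIntegral.integral_of_le hx.le]
  have hd : ∀ u ∈ Set.uIcc (0:ℝ) x,
      HasDerivAt (fun v => -(x/(k+1)) * (1-v/x)^(k+1)) ((1 - u/x)^k) u := by
    intro u _
    have h1 : HasDerivAt (fun v : ℝ => 1 - v/x) (-(1/x)) u := by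
      simpa using ((hasDerivAt_id u).div_const x).const_sub 1
    have h2 := h1.pow (k+1)
    have h3 := h2.const_mul (-(x/(k+1)))
    refine h3.congr_deriv ?_
    have : ((k:ℝ)+1) ≠ 0 := by positivity
    rw [Nat.add_sub_cancel]
    push_cast
    field_simp
  have hcont : IntervalIntegrable (fun u => (1 - u/x)^k) volume 0 x := by
    apply Continuous.intervalIntegrable
    fun_prop
  have := intervalIntegral.integral_eq_sub_of_hasDerivAt hd hcont
  rw [this]
  have hxx : x / x = 1 := div_self hx.ne'
  simp [hxx]

noncomputable def fn (x : ℝ) (n : ℕ) (u : ℝ) : ℝ := (1 - (1 - u/x)^n)/u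

lemma fn_eq (x : ℝ) (hx : 0 < x) (n : ℕ) {u : ℝ} (hu : u ∈ Set.Ioc (0:ℝ) x) :
    fn x n u = (1/x) * ∑ k ∈ Finset.range n, (1 - u/x)^k := by
  have hu0 : u ≠ 0 := ne_of_gt hu.1
  have h := geom_sum_mul (1 - u/x) n
  have h2 : (∑ i ∈ Finset.range n, (1 - u/x) ^ i) * (-(u/x)) = (1 - u/x) ^ n - 1 := by
    rw [← h]; ring_nf
  have key : u/x * (∑ i ∈ Finset.range n, (1 - u/x) ^ i) = 1 - (1 - u/x)^n := by
    linear_combination -h2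
  unfold fn
  rw [← key, div_eq_iff hu0]
  ring

lemma fn_int (x : ℝ) (hx : 0 < x) (n : ℕ) :
    ∫ u in Set.Ioc (0:ℝ) x, fn x n u = (harmonic n : ℝ) := by
  rw [setIntegral_congr_fun measurableSet_Ioc (fun u hu => fn_eq x hx n hu)]
  rw [integral_const_mul]
  rw [integral_finset_sum _ (fun k _ => (Continuous.integrableOn_Ioc (by fun_prop)))]
  have : ∀ k ∈ Finset.range n, ∫ u in Set.Ioc (0:ℝ) x, (1 - u/x)^k = x/(k+1) :=
    fun k _ => int_pow x hx k
  rw [Finset.sum_congr rfl this]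
  rw [harmonic]
  push_cast
  rw [Finset.mul_sum]
  apply Finset.sum_congr rfl
  intro k _
  rw [one_div, inv_mul_eq_div, div_div, mul_comm, ← div_div, div_self hx.ne', one_div]

lemma fn_bounds (x : ℝ) (hx : 0 < x) (n : ℕ) {u : ℝ} (hu : u ∈ Set.Ioc (0:ℝ) x) :
    0 ≤ fn x n u ∧ fn x n u ≤ n / x := by
  rw [fn_eq x hx n hu]
  have h1 : 0 ≤ 1 - u/x := by
    rw [sub_nonneg, div_le_one hx]; exact hu.2
  have h2 : 1 - u/x ≤ 1 := by
    have : 0 < u/x := div_pos hu.1 hx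
    linarith
  constructor
  · apply mul_nonneg (by positivity)
    apply Finset.sum_nonneg
    intro k _
    positivity
  · have : ∑ k ∈ Finset.range n, (1 - u/x)^k ≤ ∑ k ∈ Finset.range n, (1:ℝ) := by
      apply Finset.sum_le_sum
      intro k _
      exact pow_le_one₀ h1 h2
    rw [Finset.sum_const, Finset.card_range, nsmul_eq_mul, mul_one] at this
    calc 1/x * ∑ k ∈ Finset.range n, (1 - u/x)^k ≤ 1/x * n := by
          apply mul_le_mul_of_nonneg_left this (by positivity)
      _ = n / x := by ring

lemma tsum_fn (x : ℝ) (hx : 0 < x) {u : ℝ} (hu0 : u ≠ 0) :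
    ∑' n : ℕ, (Real.exp (-x) * x^n/(n ! : ℝ)) * fn x n u = (1 - Real.exp (-u))/u := by
  have hxne : x ≠ 0 := hx.ne'
  have hdecomp : (fun n : ℕ => (Real.exp (-x) * x^n/(n ! : ℝ)) * fn x n u)
      = fun n => (Real.exp (-x)/u) * (x^n/(n ! : ℝ))
        - (Real.exp (-x)/u) * ((x-u)^n/(n ! : ℝ)) := by
    funext n
    have hfact : (n ! : ℝ) ≠ 0 := Nat.cast_ne_zero.mpr n.factorial_ne_zero
    have hpow : (x - u)^n = x^n * (1-u/x)^n := by
      rw [← mul_pow]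
      congr 1
      field_simp
    unfold fn
    rw [hpow]
    field_simp
  rw [hdecomp, Summable.tsum_sub ((summable_p x).mul_left _) ((summable_p (x-u)).mul_left _),
    tsum_mul_left, tsum_mul_left, ← exp_tsum, ← exp_tsum]
  rw [div_mul_eq_mul_div, div_mul_eq_mul_div, ← Real.exp_add, ← Real.exp_add]
  have e1 : -x + x = 0 := by ring
  have e2 : -x + (x - u) = -u := by ring
  rw [e1, e2, Real.exp_zero]
  ring

lemma tsum_PH_eq (x : ℝ) (hx : 0 < x) :
    ∑' n : ℕ, (Real.exp (-x) * x^n/(n ! : ℝ)) * (harmonic n : ℝ)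
      = ∫ u in Set.Ioc (0:ℝ) x, (1 - Real.exp (-u))/u := by
  have hmeas : ∀ n : ℕ, AEStronglyMeasurable
      (fun u => (Real.exp (-x) * x^n/(n ! : ℝ)) * fn x n u)
      (volume.restrict (Set.Ioc (0:ℝ) x)) := by
    intro n
    apply Measurable.aestronglyMeasurable
    unfold fn
    measurability
  have hsummable : Summable (fun n : ℕ => (Real.exp (-x) * x^n/(n ! : ℝ)) * n) := by
    have : (fun n : ℕ => (Real.exp (-x) * x^n/(n ! : ℝ)) * n)
        = fun n : ℕ => Real.exp (-x) * ((n : ℝ) * (x^n/(n ! : ℝ))) := by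
      funext n; ring
    rw [this]
    exact (summable_np x).mul_left _
  have hbound : ∑' n : ℕ, ∫⁻ u, ‖(Real.exp (-x) * x^n/(n ! : ℝ)) * fn x n u‖₊
      ∂(volume.restrict (Set.Ioc (0:ℝ) x)) ≠ ⊤ := by
    have hPn : ∀ n : ℕ, (0:ℝ) ≤ Real.exp (-x) * x^n/(n ! : ℝ) := by
      intro n; positivity
    have key : ∀ n : ℕ, ∫⁻ u, ‖(Real.exp (-x) * x^n/(n ! : ℝ)) * fn x n u‖₊
        ∂(volume.restrict (Set.Ioc (0:ℝ) x))
        ≤ ENNReal.ofReal ((Real.exp (-x) * x^n/(n ! : ℝ)) * n) := by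
      intro n
      have hae : ∀ᵐ u ∂(volume.restrict (Set.Ioc (0:ℝ) x)),
          (‖(Real.exp (-x) * x^n/(n ! : ℝ)) * fn x n u‖₊ : ℝ≥0∞)
          ≤ ENNReal.ofReal ((Real.exp (-x) * x^n/(n ! : ℝ)) * (n/x)) := by
        rw [ae_restrict_iff' measurableSet_Ioc]
        apply ae_of_all
        intro u hu
        obtain ⟨h0, h1⟩ := fn_bounds x hx n hu
        have hval : (0:ℝ) ≤ (Real.exp (-x) * x^n/(n ! : ℝ)) * fn x n u :=
          mul_nonneg (hPn n) h0
        rw [← enorm_eq_nnnorm, Real.enorm_eq_ofReal hval]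
        exact ENNReal.ofReal_le_ofReal (mul_le_mul_of_nonneg_left h1 (hPn n))
      calc ∫⁻ u, ‖(Real.exp (-x) * x^n/(n ! : ℝ)) * fn x n u‖₊
            ∂(volume.restrict (Set.Ioc (0:ℝ) x))
          ≤ ∫⁻ _, ENNReal.ofReal ((Real.exp (-x) * x^n/(n ! : ℝ)) * (n/x))
            ∂(volume.restrict (Set.Ioc (0:ℝ) x)) := lintegral_mono_ae hae
        _ = ENNReal.ofReal ((Real.exp (-x) * x^n/(n ! : ℝ)) * (n/x))
            * volume (Set.Ioc (0:ℝ) x) := by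
            rw [lintegral_const, Measure.restrict_apply MeasurableSet.univ, Set.univ_inter]
        _ = ENNReal.ofReal ((Real.exp (-x) * x^n/(n ! : ℝ)) * n) := by
            rw [Real.volume_Ioc, sub_zero, ← ENNReal.ofReal_mul (by positivity)]
            congr 1
            field_simp
    have h2 : ∑' n : ℕ, ∫⁻ u, ‖(Real.exp (-x) * x^n/(n ! : ℝ)) * fn x n u‖₊
        ∂(volume.restrict (Set.Ioc (0:ℝ) x))
        ≤ ∑' n : ℕ, ENNReal.ofReal ((Real.exp (-x) * x^n/(n ! : ℝ)) * n) :=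
      ENNReal.tsum_le_tsum key
    have h3 : ∑' n : ℕ, ENNReal.ofReal ((Real.exp (-x) * x^n/(n ! : ℝ)) * n)
        = ENNReal.ofReal (∑' n : ℕ, (Real.exp (-x) * x^n/(n ! : ℝ)) * n) := by
      rw [ENNReal.ofReal_tsum_of_nonneg (fun n => by positivity) hsummable]
    rw [h3] at h2
    exact ne_top_of_le_ne_top ENNReal.ofReal_ne_top h2
  have h := integral_tsum hmeas hbound
  have hL : ∫ u in Set.Ioc (0:ℝ) x, ∑' n : ℕ, (Real.exp (-x) * x^n/(n ! : ℝ)) * fn x n u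
      = ∫ u in Set.Ioc (0:ℝ) x, (1 - Real.exp (-u))/u :=
    setIntegral_congr_fun measurableSet_Ioc (fun u hu => tsum_fn x hx (ne_of_gt hu.1))
  have hR : ∀ n : ℕ, ∫ u in Set.Ioc (0:ℝ) x, (Real.exp (-x) * x^n/(n ! : ℝ)) * fn x n u
      = (Real.exp (-x) * x^n/(n ! : ℝ)) * (harmonic n : ℝ) := by
    intro n
    rw [integral_const_mul, fn_int x hx n]
  calc ∑' n : ℕ, (Real.exp (-x) * x^n/(n ! : ℝ)) * (harmonic n : ℝ)
      = ∑' n : ℕ, ∫ u in Set.Ioc (0:ℝ) x, (Real.exp (-x) * x^n/(n ! : ℝ)) * fn x n u := by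
        exact tsum_congr (fun n => (hR n).symm)
    _ = ∫ u in Set.Ioc (0:ℝ) x, ∑' n : ℕ, (Real.exp (-x) * x^n/(n ! : ℝ)) * fn x n u :=
        h.symm
    _ = _ := hL

noncomputable def Jint (x : ℝ) : ℝ := ∫ u in Set.Ioc (0:ℝ) x, (1 - Real.exp (-u))/u

lemma g_bounds {u : ℝ} (hu : 0 < u) :
    0 ≤ (1 - Real.exp (-u))/u ∧ (1 - Real.exp (-u))/u ≤ 1 := by
  have h1 : Real.exp (-u) ≤ 1 := Real.exp_le_one_iff.mpr (by linarith)
  have h2 : 1 - u ≤ Real.exp (-u) := by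
    have := Real.add_one_le_exp (-u)
    linarith
  constructor
  · apply div_nonneg (by linarith) hu.le
  · rw [div_le_one hu]; linarith

lemma integrableOn_g (y : ℝ) : IntegrableOn (fun u => (1 - Real.exp (-u))/u)
    (Set.Ioc (0:ℝ) y) := by
  apply Measure.integrableOn_of_bounded (M := 1)
  · rw [Real.volume_Ioc]; exact ENNReal.ofReal_ne_top
  · apply Measurable.aestronglyMeasurable
    exact (measurable_const.sub ((measurable_id.neg).exp)).div measurable_id
  · rw [ae_restrict_iff' measurableSet_Ioc]
    apply ae_of_all
    intro u hu
    obtain ⟨h0, h1⟩ := g_bounds hu.1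
    rw [Real.norm_of_nonneg h0]
    exact h1

lemma Jint_mono {x y : ℝ} (hx : 0 < x) (hxy : x ≤ y) :
    Jint y ≤ Jint x + (Real.log y - Real.log x) := by
  have hy : 0 < y := lt_of_lt_of_le hx hxy
  have hsplit : Jint y = Jint x + ∫ u in Set.Ioc x y, (1 - Real.exp (-u))/u := by
    unfold Jint
    rw [← Set.Ioc_union_Ioc_eq_Ioc hx.le hxy,
      setIntegral_union (Set.Ioc_disjoint_Ioc_of_le le_rfl) measurableSet_Ioc
        (integrableOn_g x) ((integrableOn_g y).mono_set (fun u hu => ⟨hx.trans hu.1, hu.2⟩))]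
  have hinv : IntegrableOn (fun u : ℝ => u⁻¹) (Set.Ioc x y) := by
    apply IntegrableOn.mono_set (t := Set.Icc x y) _ Set.Ioc_subset_Icc_self
    apply ContinuousOn.integrableOn_Icc
    apply ContinuousOn.inv₀ continuousOn_id
    intro u hu
    exact ne_of_gt (lt_of_lt_of_le hx hu.1)
  have htail : ∫ u in Set.Ioc x y, (1 - Real.exp (-u))/u ≤ Real.log y - Real.log x := by
    have h1 : ∫ u in Set.Ioc x y, (1 - Real.exp (-u))/u ≤ ∫ u in Set.Ioc x y, u⁻¹ := by
      apply setIntegral_mono_on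
        ((integrableOn_g y).mono_set (fun u hu => ⟨hx.trans hu.1, hu.2⟩)) hinv
        measurableSet_Ioc
      intro u hu
      have hu0 : 0 < u := hx.trans hu.1
      have h2 : Real.exp (-u) ≥ 0 := (Real.exp_pos _).le
      rw [div_le_iff₀ hu0, inv_mul_cancel₀ hu0.ne']
      linarith [Real.exp_pos (-u)]
    have h2 : ∫ u in Set.Ioc x y, (u:ℝ)⁻¹ = Real.log y - Real.log x := by
      rw [← intervalIntegral.integral_of_le hxy, integral_inv_of_pos hx hy,
        Real.log_div hy.ne' hx.ne']
    linarith
  linarith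

lemma Jint_lower {y : ℝ} (hy : 0 < y) :
    Real.eulerMascheroniConstant + Real.log y
      - (2*(y+1)/y^2 + Real.exp (-y) * (Real.eulerMascheroniConstant + Real.log y - 1))
      ≤ Jint y := by
  have h1 := EH_lower (x := y) hy
  have h2 := tsum_PH_eq y hy
  have h3 : ∑' n : ℕ, (Real.exp (-y) * y^n/(n ! : ℝ)) * (harmonic n : ℝ)
      = Real.exp (-y) * ∑' n : ℕ, (y^n/(n ! : ℝ)) * (harmonic n : ℝ) := by
    rw [← tsum_mul_left]
    apply tsum_congr
    intro n
    ring
  have hexp : Real.exp (-y) * Real.exp y = 1 := by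
    rw [← Real.exp_add]; simp
  have h4 : Real.exp (-y) * (Real.exp y * (Real.eulerMascheroniConstant + Real.log y)
      - 2 * (y+1) * Real.exp y / y^2 - (Real.eulerMascheroniConstant + Real.log y - 1))
      ≤ Real.exp (-y) * ∑' n : ℕ, (y^n/(n ! : ℝ)) * (harmonic n : ℝ) :=
    mul_le_mul_of_nonneg_left h1 (Real.exp_pos _).le
  have h5 : Real.exp (-y) * (Real.exp y * (Real.eulerMascheroniConstant + Real.log y)
      - 2 * (y+1) * Real.exp y / y^2 - (Real.eulerMascheroniConstant + Real.log y - 1))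
      = (Real.eulerMascheroniConstant + Real.log y)
        - 2*(y+1)/y^2 - Real.exp (-y) * (Real.eulerMascheroniConstant + Real.log y - 1) := by
    linear_combination (Real.eulerMascheroniConstant + Real.log y - 2*(y+1)/y^2) * hexp
  rw [h5] at h4
  rw [← h3] at h4
  rw [h2] at h4
  unfold Jint
  linarith


lemma err_tendsto : Tendsto (fun y : ℝ => 2*(y+1)/y^2
    + Real.exp (-y) * (Real.eulerMascheroniConstant + Real.log y - 1)) atTop (nhds 0) := by
  have hinv : Tendsto (fun y : ℝ => y⁻¹) atTop (nhds 0) := tendsto_inv_atTop_zero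
  have h1 : Tendsto (fun y : ℝ => 2 * y⁻¹ + 2 * (y⁻¹ * y⁻¹)) atTop (nhds 0) := by
    have := ((hinv.const_mul 2).add ((hinv.mul hinv).const_mul 2))
    simpa using this
  have h1' : Tendsto (fun y : ℝ => 2*(y+1)/y^2) atTop (nhds 0) := by
    apply h1.congr'
    filter_upwards [eventually_gt_atTop (0:ℝ)] with y hy
    field_simp
  have hexp : Tendsto (fun y : ℝ => Real.exp (-y)) atTop (nhds 0) :=
    Real.tendsto_exp_neg_atTop_nhds_zero
  have hexplog : Tendsto (fun y : ℝ => Real.exp (-y) * Real.log y) atTop (nhds 0) := by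
    have hup : Tendsto (fun y : ℝ => y * Real.exp (-y)) atTop (nhds 0) := by
      simpa using Real.tendsto_pow_mul_exp_neg_atTop_nhds_zero 1
    apply tendsto_of_tendsto_of_tendsto_of_le_of_le' tendsto_const_nhds hup
    · filter_upwards [eventually_ge_atTop (1:ℝ)] with y hy
      exact mul_nonneg (Real.exp_pos _).le (Real.log_nonneg hy)
    · filter_upwards [eventually_ge_atTop (1:ℝ)] with y hy
      rw [mul_comm]
      apply mul_le_mul_of_nonneg_right _ (Real.exp_pos _).le
      calc Real.log y ≤ y - 1 := Real.log_le_sub_one_of_pos (by linarith)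
        _ ≤ y := by linarith
  have h2 : Tendsto (fun y : ℝ => Real.exp (-y) * (Real.eulerMascheroniConstant
      + Real.log y - 1)) atTop (nhds 0) := by
    have hc : Tendsto (fun y : ℝ => Real.exp (-y) * (Real.eulerMascheroniConstant - 1))
        atTop (nhds 0) := by
      simpa using hexp.mul_const (Real.eulerMascheroniConstant - 1)
    have := hc.add hexplog
    simp only [add_zero] at this
    apply this.congr
    intro y
    ring
  have := h1'.add h2
  simpa using this


lemma Jint_ge {x : ℝ} (hx : 0 < x) :
    Real.eulerMascheroniConstant + Real.log x ≤ Jint x := by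
  have hev : ∀ᶠ y in atTop, Real.eulerMascheroniConstant + Real.log x
      - (2*(y+1)/y^2 + Real.exp (-y) * (Real.eulerMascheroniConstant + Real.log y - 1))
      ≤ Jint x := by
    filter_upwards [eventually_ge_atTop x, eventually_gt_atTop (0:ℝ)] with y hxy hy
    have h1 := Jint_lower hy
    have h2 := Jint_mono hx hxy
    linarith
  have hT : Tendsto (fun y : ℝ => Real.eulerMascheroniConstant + Real.log x
      - (2*(y+1)/y^2 + Real.exp (-y) * (Real.eulerMascheroniConstant + Real.log y - 1)))
      atTop (nhds (Real.eulerMascheroniConstant + Real.log x)) := by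
    have := (tendsto_const_nhds (x := Real.eulerMascheroniConstant + Real.log x)
      (f := atTop (α := ℝ))).sub err_tendsto
    simpa using this
  exact le_of_tendsto hT hev

lemma EH_final {x : ℝ} (hx : 0 < x) :
    Real.eulerMascheroniConstant + Real.log x
      ≤ ∑' n : ℕ, (Real.exp (-x) * x^n/(n ! : ℝ)) * (harmonic n : ℝ) := by
  rw [tsum_PH_eq x hx]
  exact Jint_ge hx

/-- `ψ(y) = −γ + Σ_{k=1}^{y−1} 1/k` for a positive integer `y`. -/
noncomputable def psi (y : ℕ) : ℝ :=
  -Real.eulerMascheroniConstant + ∑ k ∈ Finset.Icc 1 (y - 1), (1 : ℝ) / k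

/-- `g(0) = 0` and `g(y) = y·ψ(y)` for `y ≥ 1`. -/
noncomputable def g (y : ℕ) : ℝ := y * psi y

/-- The normalizing sum `S(q) = Σ_{y=0}^∞ e^{g(y)}·(q/e)^y / y!` of the digamma distribution. -/
noncomputable def S (q : ℝ) : ℝ :=
  ∑' y : ℕ, Real.exp (g y) * (q / Real.exp 1) ^ y / Nat.factorial y

/-- The pmf of the digamma distribution: `Y^(q)(y) = e^{g(y)}·(q/e)^y / (y!·S(q))`. -/
noncomputable def digammaPMF (q : ℝ) (y : ℕ) : ℝ :=
  Real.exp (g y) * (q / Real.exp 1) ^ y / (Nat.factorial y * S q)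

/-- The pmf of the Poisson distribution with mean `l`. -/
noncomputable def poissonPMF (l : ℝ) (y : ℕ) : ℝ := Real.exp (-l) * l ^ y / Nat.factorial y

/-- Kullback–Leibler divergence between distributions on ℕ:
`D_KL(P‖Q) = Σ_y P(y)·log(P(y)/Q(y))`. -/
noncomputable def klDivPMF (P Q : ℕ → ℝ) : ℝ := ∑' y : ℕ, P y * Real.log (P y / Q y)

/-- The exponential integral `E₁(x) = ∫_1^∞ e^{−xt}/t dt`. -/
noncomputable def E1 (x : ℝ) : ℝ := ∫ t in Set.Ioi (1 : ℝ), Real.exp (-(x * t)) / t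

lemma psi_harmonic (y : ℕ) : psi y = -Real.eulerMascheroniConstant + (harmonic (y-1) : ℝ) := by
  have h : ((harmonic (y-1) : ℚ) : ℝ) = ∑ k ∈ Finset.Icc 1 (y-1), (1:ℝ)/k := by
    rw [harmonic_eq_sum_Icc]
    push_cast
    simp [one_div]
  rw [psi, h]

lemma g_zero : g 0 = 0 := by simp [g]

lemma g_succ (n : ℕ) : g (n+1) = ((n:ℝ)+1) * (-Real.eulerMascheroniConstant + (harmonic n : ℝ)) := by
  rw [g, psi_harmonic]
  simp

lemma g_le_mul_log (y : ℕ) : g y ≤ (y:ℝ) * Real.log y := by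
  rcases Nat.eq_zero_or_pos y with h | h
  · subst h; simp [g_zero]
  · have h1 : psi y ≤ Real.log y := by
      rw [psi_harmonic]
      have h2 := harmonic_lt (y-1)
      have h4 : (((y:ℕ) - 1 : ℕ) : ℝ) + 1 = (y:ℝ) := by
        rw [Nat.cast_pred h]; ring
      rw [h4] at h2
      linarith
    rw [g]
    exact mul_le_mul_of_nonneg_left h1 (Nat.cast_nonneg y)

lemma pow_self_le_exp_mul_factorial (y : ℕ) : (y:ℝ)^y ≤ Real.exp y * (y ! : ℝ) := by
  have h1 : (y:ℝ)^y/(y ! : ℝ) ≤ Real.exp y := by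
    rw [exp_tsum (y:ℝ)]
    exact Summable.le_tsum (summable_p (y:ℝ)) y (fun k _ => by positivity)
  have h2 : (0:ℝ) < (y ! : ℝ) := by exact_mod_cast y.factorial_pos
  rw [div_le_iff₀ h2] at h1
  linarith

lemma Sterm_pos {q : ℝ} (hq0 : 0 < q) (y : ℕ) :
    0 < Real.exp (g y) * (q / Real.exp 1) ^ y / (y ! : ℝ) := by
  have : 0 < q / Real.exp 1 := div_pos hq0 (Real.exp_pos 1)
  positivity

lemma Sterm_le {q : ℝ} (hq0 : 0 < q) (y : ℕ) :
    Real.exp (g y) * (q / Real.exp 1) ^ y / (y ! : ℝ) ≤ q^y := by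
  have hfac : (0:ℝ) < (y ! : ℝ) := by exact_mod_cast y.factorial_pos
  have hqy : (0:ℝ) ≤ q^y := pow_nonneg hq0.le y
  have hgy : Real.exp (g y) ≤ (y:ℝ)^y := by
    rcases Nat.eq_zero_or_pos y with h | h
    · subst h; simp [g_zero]
    · calc Real.exp (g y) ≤ Real.exp ((y:ℝ) * Real.log y) := Real.exp_le_exp.mpr (g_le_mul_log y)
        _ = (Real.exp (Real.log y))^y := by rw [← Real.exp_nat_mul]
        _ = (y:ℝ)^y := by rw [Real.exp_log (by exact_mod_cast h)]
  have hdivpow : (q / Real.exp 1) ^ y = q^y / Real.exp y := by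
    rw [div_pow, ← Real.exp_nat_mul, mul_one]
  rw [hdivpow]
  have hquo : (0:ℝ) ≤ q^y / Real.exp y := div_nonneg hqy (Real.exp_pos _).le
  calc Real.exp (g y) * (q^y / Real.exp y) / (y ! : ℝ)
      ≤ (y:ℝ)^y * (q^y / Real.exp y) / (y ! : ℝ) := by
        apply div_le_div_of_nonneg_right _ hfac.le
        exact mul_le_mul_of_nonneg_right hgy hquo
    _ ≤ q^y := by
        rw [div_le_iff₀ hfac]
        calc (y:ℝ)^y * (q^y/Real.exp y)
            ≤ (Real.exp y * (y ! : ℝ)) * (q^y/Real.exp y) :=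
              mul_le_mul_of_nonneg_right (pow_self_le_exp_mul_factorial y) hquo
          _ = q^y * (y ! : ℝ) := by
              field_simp

lemma S_summable {q : ℝ} (hq0 : 0 < q) (hq1 : q < 1) :
    Summable (fun y : ℕ => Real.exp (g y) * (q / Real.exp 1) ^ y / (y ! : ℝ)) := by
  apply Summable.of_nonneg_of_le (fun y => (Sterm_pos hq0 y).le) (fun y => Sterm_le hq0 y)
  exact summable_geometric_of_lt_one hq0.le hq1

lemma S_ge_one {q : ℝ} (hq0 : 0 < q) (hq1 : q < 1) : 1 ≤ S q := by
  have h0 : Real.exp (g 0) * (q / Real.exp 1) ^ 0 / (0 ! : ℝ) = 1 := by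
    simp [g_zero]
  rw [S]
  calc (1:ℝ) = Real.exp (g 0) * (q / Real.exp 1) ^ 0 / (0 ! : ℝ) := h0.symm
    _ ≤ ∑' y : ℕ, Real.exp (g y) * (q / Real.exp 1) ^ y / (y ! : ℝ) :=
        Summable.le_tsum (S_summable hq0 hq1) 0 (fun k _ => (Sterm_pos hq0 k).le)

lemma S_pos {q : ℝ} (hq0 : 0 < q) (hq1 : q < 1) : 0 < S q :=
  lt_of_lt_of_le one_pos (S_ge_one hq0 hq1)


section Main
variable {q x : ℝ}

lemma poisson_pos (hx : 0 < x) (y : ℕ) : 0 < poissonPMF x y := by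
  unfold poissonPMF
  have : (0:ℝ) < (y ! : ℝ) := by exact_mod_cast y.factorial_pos
  positivity

lemma summable_poisson (hx : 0 < x) : Summable (fun y : ℕ => poissonPMF x y) := by
  have : (fun y : ℕ => poissonPMF x y)
      = fun y : ℕ => Real.exp (-x) * (x^y/(y ! : ℝ)) := by
    funext y; unfold poissonPMF; ring
  rw [this]
  exact (summable_p x).mul_left _

lemma tsum_poisson (hx : 0 < x) : ∑' y : ℕ, poissonPMF x y = 1 := by
  have : (fun y : ℕ => poissonPMF x y)
      = fun y : ℕ => Real.exp (-x) * (x^y/(y ! : ℝ)) := by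
    funext y; unfold poissonPMF; ring
  rw [this, tsum_mul_left, ← exp_tsum, ← Real.exp_add]
  simp

lemma summable_y_poisson (hx : 0 < x) : Summable (fun y : ℕ => (y:ℝ) * poissonPMF x y) := by
  have : (fun y : ℕ => (y:ℝ) * poissonPMF x y)
      = fun y : ℕ => Real.exp (-x) * ((y:ℝ) * (x^y/(y ! : ℝ))) := by
    funext y; unfold poissonPMF; ring
  rw [this]
  exact (summable_np x).mul_left _

lemma tsum_y_poisson (hx : 0 < x) : ∑' y : ℕ, (y:ℝ) * poissonPMF x y = x := by
  have : (fun y : ℕ => (y:ℝ) * poissonPMF x y)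
      = fun y : ℕ => Real.exp (-x) * ((y:ℝ) * (x^y/(y ! : ℝ))) := by
    funext y; unfold poissonPMF; ring
  rw [this, tsum_mul_left, tsum_np]
  rw [← mul_assoc, mul_comm (Real.exp (-x)) x, mul_assoc, ← Real.exp_add]
  simp

lemma abs_g_le (y : ℕ) : |g y| ≤ (y:ℝ) * (Real.eulerMascheroniConstant + y) := by
  have hpsi : |psi y| ≤ Real.eulerMascheroniConstant + y := by
    rw [psi_harmonic, abs_le]
    have h1 : (0:ℝ) ≤ (harmonic (y-1) : ℝ) := by
      rcases eq_or_ne (y-1) 0 with h | h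
      · simp [h]
      · exact_mod_cast (harmonic_pos h).le
    have h2 : (harmonic (y-1) : ℝ) ≤ ((y:ℕ) - 1 : ℕ) := harmonic_le (y-1)
    have h3 : (((y:ℕ) - 1 : ℕ) : ℝ) ≤ (y:ℝ) := by
      exact_mod_cast Nat.sub_le y 1
    have hγ : (0:ℝ) < Real.eulerMascheroniConstant :=
      lt_trans one_half_pos Real.one_half_lt_eulerMascheroniConstant
    constructor <;> [linarith; linarith]
  rw [g, abs_mul, Nat.abs_cast]
  exact mul_le_mul_of_nonneg_left hpsi (Nat.cast_nonneg y)

lemma summable_poisson_g (hx : 0 < x) : Summable (fun y : ℕ => poissonPMF x y * g y) := by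
  apply Summable.of_norm_bounded (g := fun y : ℕ =>
    Real.eulerMascheroniConstant * ((y:ℝ) * (Real.exp (-x) * (x^y/(y ! : ℝ))))
      + (y:ℝ)^2 * (Real.exp (-x) * (x^y/(y ! : ℝ))))
  · apply Summable.add
    · exact (((summable_np x).mul_left (Real.exp (-x))).mul_left
        Real.eulerMascheroniConstant).congr (fun y => by ring)
    · have : Summable (fun y : ℕ => Real.exp (-x) * ((y:ℝ)^2 * (x^y/(y ! : ℝ)))) :=
        (summable_nnp x).mul_left _
      exact this.congr (fun y => by ring)
  · intro y
    rw [norm_mul]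
    have hp : ‖poissonPMF x y‖ = poissonPMF x y := Real.norm_of_nonneg (poisson_pos hx y).le
    rw [hp]
    calc poissonPMF x y * ‖g y‖
        ≤ poissonPMF x y * ((y:ℝ) * (Real.eulerMascheroniConstant + y)) := by
          apply mul_le_mul_of_nonneg_left _ (poisson_pos hx y).le
          exact abs_g_le y
      _ = Real.eulerMascheroniConstant * ((y:ℝ) * poissonPMF x y)
            + (y:ℝ)^2 * poissonPMF x y := by ring
      _ = Real.eulerMascheroniConstant * ((y:ℝ) * (Real.exp (-x) * (x^y/(y ! : ℝ))))
            + (y:ℝ)^2 * (Real.exp (-x) * (x^y/(y ! : ℝ))) := by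
          unfold poissonPMF; ring

lemma tsum_poisson_g (hx : 0 < x) :
    ∑' y : ℕ, poissonPMF x y * g y
      = x * (∑' n : ℕ, (Real.exp (-x) * x^n/(n ! : ℝ)) * (harmonic n : ℝ))
        - x * Real.eulerMascheroniConstant := by
  rw [Summable.tsum_eq_zero_add (summable_poisson_g hx)]
  have h0 : poissonPMF x 0 * g 0 = 0 := by rw [g_zero]; ring
  rw [h0, zero_add]
  have hsucc : ∀ n : ℕ, poissonPMF x (n+1) * g (n+1)
      = x * ((Real.exp (-x) * x^n/(n ! : ℝ)) * (harmonic n : ℝ))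
        - x * Real.eulerMascheroniConstant * (Real.exp (-x) * (x^n/(n ! : ℝ))) := by
    intro n
    rw [g_succ]
    unfold poissonPMF
    rw [Nat.factorial_succ]
    push_cast
    have hfac : ((n ! : ℕ) : ℝ) ≠ 0 := Nat.cast_ne_zero.mpr n.factorial_ne_zero
    have hn1 : ((n:ℝ) + 1) ≠ 0 := by positivity
    field_simp
    ring
  rw [tsum_congr hsucc]
  have hs1 : Summable (fun n : ℕ => x * ((Real.exp (-x) * x^n/(n ! : ℝ)) * (harmonic n : ℝ))) := by
    apply Summable.mul_left
    have : (fun n : ℕ => (Real.exp (-x) * x^n/(n ! : ℝ)) * (harmonic n : ℝ))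
        = fun n : ℕ => Real.exp (-x) * ((x^n/(n ! : ℝ)) * (harmonic n : ℝ)) := by
      funext n; ring
    rw [this]
    exact (summable_H x hx.le).mul_left _
  have hs2 : Summable (fun n : ℕ =>
      x * Real.eulerMascheroniConstant * (Real.exp (-x) * (x^n/(n ! : ℝ)))) :=
    ((summable_p x).mul_left _).mul_left _
  rw [Summable.tsum_sub hs1 hs2, tsum_mul_left, tsum_mul_left, tsum_mul_left, ← exp_tsum,
    ← Real.exp_add]
  simp

lemma log_ratio (hq0 : 0 < q) (hq1 : q < 1) (hx : 0 < x) (y : ℕ) :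
    poissonPMF x y * Real.log (poissonPMF x y / digammaPMF q y)
      = ((-x + Real.log (S q)) * poissonPMF x y
        + (Real.log x + 1 - Real.log q) * ((y:ℝ) * poissonPMF x y))
        - poissonPMF x y * g y := by
  have hfac : ((y ! : ℕ) : ℝ) ≠ 0 := Nat.cast_ne_zero.mpr y.factorial_ne_zero
  have hfacpos : (0:ℝ) < (y ! : ℝ) := by exact_mod_cast y.factorial_pos
  have hS := S_pos hq0 hq1
  have hP : 0 < poissonPMF x y := poisson_pos hx y
  have hQ : 0 < digammaPMF q y := by
    unfold digammaPMF
    have h1 : 0 < q / Real.exp 1 := div_pos hq0 (Real.exp_pos 1)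
    positivity
  have hlogP : Real.log (poissonPMF x y) = -x + y * Real.log x - Real.log (y ! : ℝ) := by
    unfold poissonPMF
    rw [Real.log_div (by positivity) hfac, Real.log_mul (Real.exp_ne_zero _) (by positivity),
      Real.log_exp, Real.log_pow]
  have hlogQ : Real.log (digammaPMF q y)
      = g y + y * (Real.log q - 1) - (Real.log (y ! : ℝ) + Real.log (S q)) := by
    unfold digammaPMF
    have h1 : (0:ℝ) < q / Real.exp 1 := div_pos hq0 (Real.exp_pos 1)
    rw [Real.log_div (by positivity) (by positivity),
      Real.log_mul (Real.exp_ne_zero _) (by positivity),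
      Real.log_exp, Real.log_pow, Real.log_mul hfac hS.ne',
      Real.log_div hq0.ne' (Real.exp_ne_zero 1), Real.log_exp]
  rw [Real.log_div hP.ne' hQ.ne', hlogP, hlogQ]
  ring

/-- For every `q ∈ (0,1)` and every `x ≥ 0`,
`D_KL(Poi_x ‖ Y^(q)) ≤ log S(q) − x·log q`. -/
theorem stmt2 (q x : ℝ) (hq : q ∈ Set.Ioo (0 : ℝ) 1) (hx : 0 ≤ x) :
    klDivPMF (poissonPMF x) (digammaPMF q)
      ≤ Real.log (S q) - x * Real.log q := by
  obtain ⟨hq0, hq1⟩ := hq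
  rcases eq_or_lt_of_le hx with heq | hx0
  · -- x = 0
    unfold klDivPMF
    rw [← heq]
    have hmain : ∑' y : ℕ, poissonPMF 0 y * Real.log (poissonPMF 0 y / digammaPMF q y)
        = Real.log (S q) := by
      rw [tsum_eq_single 0]
      · have hP0 : poissonPMF 0 0 = 1 := by
          unfold poissonPMF; simp
        have hQ0 : digammaPMF q 0 = 1 / S q := by
          unfold digammaPMF
          rw [g_zero]
          simp
        rw [hP0, hQ0, one_mul, one_div, one_div, inv_inv]
      · intro y hy
        have : poissonPMF 0 y = 0 := by
          unfold poissonPMF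
          rw [zero_pow hy]
          simp
        rw [this, zero_mul]
    rw [hmain]
    simp
  · -- x > 0
    unfold klDivPMF
    rw [tsum_congr (log_ratio hq0 hq1 hx0)]
    have hs1 : Summable (fun y : ℕ => (-x + Real.log (S q)) * poissonPMF x y) :=
      (summable_poisson hx0).mul_left _
    have hs2 : Summable (fun y : ℕ =>
        (Real.log x + 1 - Real.log q) * ((y:ℝ) * poissonPMF x y)) :=
      (summable_y_poisson hx0).mul_left _
    rw [Summable.tsum_sub (hs1.add hs2) (summable_poisson_g hx0), Summable.tsum_add hs1 hs2,
      tsum_mul_left, tsum_mul_left, tsum_poisson hx0, tsum_y_poisson hx0,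
      tsum_poisson_g hx0]
    have hEH := EH_final hx0
    have hmul : x * (Real.eulerMascheroniConstant + Real.log x)
        ≤ x * (∑' n : ℕ, (Real.exp (-x) * x^n/(n ! : ℝ)) * (harmonic n : ℝ)) :=
      mul_le_mul_of_nonneg_left hEH hx0.le
    nlinarith [hmul]
end Main
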